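/- The polynomial map F : ℝ² → ℝ², F(x,y) = (x, xy), does not have a well-defined image set germ at the origin: there exist 0 < ε₁ < ε₂ such that for every δ > 0 one has F(B_{ε₁}) ∩ B_δ ≠ F(B_{ε₂}) ∩ B_δ; moreover, for every ε > 0 the image F(B_ε) contains no open neighborhood of the origin in ℝ². -/

import Mathlib

open Metric Set

noncomputable def mk2 (a b : ℝ) : EuclideanSpace ℝ (Fin 2) :=
  (WithLp.equiv 2 (Fin 2 → ℝ)).symm ![a, b]

lemma mk2_apply0 (a b : ℝ) : mk2 a b 0 = a := rfl
lemma mk2_apply1 (a b : ℝ) : mk2 a b 1 = b := rfl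

lemma norm_eq2 (v : EuclideanSpace ℝ (Fin 2)) :
    ‖v‖ = Real.sqrt ((v 0)^2 + (v 1)^2) := by
  rw [EuclideanSpace.norm_eq]
  simp [Fin.sum_univ_two, Real.norm_eq_abs, sq_abs]

lemma eq2 (v w : EuclideanSpace ℝ (Fin 2)) (h0 : v 0 = w 0) (h1 : v 1 = w 1) : v = w := by
  ext i
  fin_cases i <;> assumption

theorem stmt16
    (F : EuclideanSpace ℝ (Fin 2) → EuclideanSpace ℝ (Fin 2))
    (hF : ∀ v : EuclideanSpace ℝ (Fin 2), F v 0 = v 0 ∧ F v 1 = v 0 * v 1) :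
    (∃ ε₁ ε₂ : ℝ, 0 < ε₁ ∧ ε₁ < ε₂ ∧ ∀ δ > (0 : ℝ),
      F '' ball 0 ε₁ ∩ ball 0 δ ≠ F '' ball 0 ε₂ ∩ ball 0 δ) ∧
    (∀ ε > (0 : ℝ), F '' ball 0 ε ∉ nhds (0 : EuclideanSpace ℝ (Fin 2))) := by
  constructor
  · refine ⟨1, 2, one_pos, one_lt_two, ?_⟩
    intro δ hδ h
    set t : ℝ := min (δ/3) (1/2) with ht
    have ht0 : 0 < t := lt_min (by linarith) (by norm_num)
    have ht1 : t ≤ δ/3 := min_le_left _ _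
    have ht2 : t ≤ 1/2 := min_le_right _ _
    -- the point q = (t, (3/2) t) is in F(B₂) ∩ B_δ
    have hq : mk2 t ((3/2) * t) ∈ F '' ball 0 2 ∩ ball 0 δ := by
      constructor
      · refine ⟨mk2 t (3/2), ?_, ?_⟩
        · rw [mem_ball_zero_iff, norm_eq2, mk2_apply0, mk2_apply1]
          rw [Real.sqrt_lt' (by norm_num)]
          nlinarith
        · refine eq2 _ _ ?_ ?_
          · rw [(hF _).1, mk2_apply0, mk2_apply0]
          · rw [(hF _).2, mk2_apply0, mk2_apply1, mk2_apply1]; ring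
      · rw [mem_ball_zero_iff, norm_eq2, mk2_apply0, mk2_apply1]
        rw [Real.sqrt_lt' hδ]
        have : t^2 ≤ (δ/3)^2 := by nlinarith
        nlinarith
    rw [← h] at hq
    obtain ⟨⟨v, hv, hvq⟩, -⟩ := hq
    rw [mem_ball_zero_iff, norm_eq2] at hv
    have h0 : v 0 = t := by rw [← (hF v).1, hvq, mk2_apply0]
    have h1 : v 0 * v 1 = (3/2) * t := by rw [← (hF v).2, hvq, mk2_apply1]
    have hv1 : v 1 = 3/2 := by
      rw [h0] at h1
      field_simp at h1
      nlinarith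
    have : (1:ℝ) ≤ Real.sqrt ((v 0)^2 + (v 1)^2) := by
      rw [show (1:ℝ) = Real.sqrt 1 by simp]
      apply Real.sqrt_le_sqrt
      rw [hv1]; nlinarith [sq_nonneg (v 0)]
    linarith
  · intro ε hε h
    obtain ⟨r, hr, hsub⟩ := Metric.mem_nhds_iff.mp h
    have hw : mk2 0 (r/2) ∈ ball (0 : EuclideanSpace ℝ (Fin 2)) r := by
      rw [mem_ball_zero_iff, norm_eq2, mk2_apply0, mk2_apply1]
      rw [Real.sqrt_lt' hr]
      nlinarith
    obtain ⟨v, -, hvw⟩ := hsub hw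
    have h0 : v 0 = 0 := by rw [← (hF v).1, hvw, mk2_apply0]
    have h1 : v 0 * v 1 = r/2 := by rw [← (hF v).2, hvw, mk2_apply1]
    rw [h0, zero_mul] at h1
    linarith
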